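/- Let G be the trefoil knot group with presentation ⟨a,b | aba = bab⟩, and let ρ: G → SL(2,ℂ) be a representation with ρ(a)=A, ρ(b)=B, tr(A)=tr(B)=2x, and set y = x² − tr(AB)/2. If ABA = BAB and the pair (A,B) is irreducible (equivalently y² ≠ (1−x²)²), then 2x² − 2y − 1 = 0. Conversely, for any (x,y) ∈ ℂ² with 2x²−2y−1=0 and y² ≠ (1−x²)², there exist A,B ∈ SL(2,ℂ) with tr(A)=tr(B)=2x, tr(AB)=2(x²−y), and ABA=BAB. -/

import Mathlib

open Matrix

/-- Cayley–Hamilton for 2×2 matrices. -/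
lemma sq_eq_trace_smul (M : Matrix (Fin 2) (Fin 2) ℂ) :
    M * M = M.trace • M - M.det • (1 : Matrix (Fin 2) (Fin 2) ℂ) := by
  ext i j
  fin_cases i <;> fin_cases j <;>
    simp [Matrix.mul_apply, Matrix.trace, Matrix.det_fin_two, Fin.sum_univ_two,
      Matrix.one_apply] <;> ring

/-- A primitive cube root of unity. -/
noncomputable def trefOmega : ℂ := (-1 + Complex.I * Real.sqrt 3) / 2

lemma trefOmega_sq : trefOmega ^ 2 + trefOmega + 1 = 0 := by
  have hr2 : ((Real.sqrt 3 : ℝ) : ℂ) ^ 2 = 3 := by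
    norm_cast
    exact Real.sq_sqrt (by norm_num)
  rw [trefOmega]
  field_simp
  linear_combination (((Real.sqrt 3 : ℝ) : ℂ) ^ 2) * Complex.I_sq - hr2

theorem trefoil_representation_variety :
    (∀ (A B : Matrix (Fin 2) (Fin 2) ℂ) (x y : ℂ),
      A.det = 1 → B.det = 1 → A.trace = 2 * x → B.trace = 2 * x →
      y = x ^ 2 - (A * B).trace / 2 → A * B * A = B * A * B →
      y ^ 2 ≠ (1 - x ^ 2) ^ 2 → 2 * x ^ 2 - 2 * y - 1 = 0) ∧
    (∀ x y : ℂ, 2 * x ^ 2 - 2 * y - 1 = 0 → y ^ 2 ≠ (1 - x ^ 2) ^ 2 →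
      ∃ A B : Matrix (Fin 2) (Fin 2) ℂ, A.det = 1 ∧ B.det = 1 ∧
        A.trace = 2 * x ∧ B.trace = 2 * x ∧ (A * B).trace = 2 * (x ^ 2 - y) ∧
        A * B * A = B * A * B) := by
  constructor
  · intro A B x y hdA hdB htA htB hy hrel hirr
    set s : ℂ := (A * B).trace with hs
    have hB2 : B * B = (2 * x) • B - (1 : Matrix (Fin 2) (Fin 2) ℂ) := by
      rw [sq_eq_trace_smul, htB, hdB, one_smul]
    have hA2 : A * A = (2 * x) • A - (1 : Matrix (Fin 2) (Fin 2) ℂ) := by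
      rw [sq_eq_trace_smul, htA, hdA, one_smul]
    have h1 : A * B * A * B = (2 * x) • (A * B * A) - B * A := by
      calc A * B * A * B = B * A * B * B := by rw [hrel]
        _ = B * A * (B * B) := by rw [mul_assoc]
        _ = B * A * ((2 * x) • B - 1) := by rw [hB2]
        _ = (2 * x) • (B * A * B) - B * A := by
            rw [mul_sub, mul_smul_comm, mul_one, mul_assoc]
        _ = (2 * x) • (A * B * A) - B * A := by rw [hrel]
    have h2 : (A * B * A * B).trace = (2 * x) * (A * B * A).trace - s := by
      rw [h1, Matrix.trace_sub, Matrix.trace_smul, Matrix.trace_mul_comm B A, ← hs]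
      simp [smul_eq_mul]
    have h3 : (A * B * A * B).trace = s ^ 2 - 2 := by
      have h' : A * B * A * B = (A * B) * (A * B) := by rw [mul_assoc]
      rw [h', sq_eq_trace_smul, Matrix.det_mul, hdA, hdB, one_mul, one_smul,
        Matrix.trace_sub, Matrix.trace_smul, Matrix.trace_one, ← hs]
      simp [smul_eq_mul]
      ring
    have h4 : (A * B * A).trace = (2 * x) * s - 2 * x := by
      rw [Matrix.trace_mul_comm (A * B) A, ← mul_assoc, hA2, Matrix.sub_mul, Matrix.smul_mul,
        one_mul, Matrix.trace_sub, Matrix.trace_smul, ← hs, htB]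
      simp [smul_eq_mul]
    have e : s ^ 2 - 2 = 2 * x * ((2 * x) * s - 2 * x) - s := by
      rw [← h3, h2, h4]
    have hfac : (s - 1) * (s - (2 * x) ^ 2 + 2) = 0 := by linear_combination e
    rcases mul_eq_zero.mp hfac with h | h
    · linear_combination (-2 : ℂ) * hy + h
    · exact absurd (by linear_combination (y + 1 - x ^ 2) * hy - (y + 1 - x ^ 2) / 2 * h) hirr
  · intro x y hxy hirr
    have hw := trefOmega_sq
    refine ⟨!![0, -1; 1, 2 * x], !![2 * x, 1 + trefOmega; trefOmega, 0], ?_, ?_, ?_, ?_, ?_, ?_⟩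
    · simp [Matrix.det_fin_two_of]
    · rw [Matrix.det_fin_two_of]
      linear_combination -hw
    · simp [Matrix.trace_fin_two_of]
    · simp [Matrix.trace_fin_two_of]
    · rw [show (!![0, -1; 1, 2 * x] : Matrix (Fin 2) (Fin 2) ℂ) * !![2 * x, 1 + trefOmega; trefOmega, 0]
        = !![-trefOmega, 0; 2 * x + 2 * x * trefOmega, 1 + trefOmega] by
          ext i j; fin_cases i <;> fin_cases j <;>
            simp [Matrix.mul_apply, Fin.sum_univ_two]]
      rw [Matrix.trace_fin_two_of]
      linear_combination -hxy
    · ext i j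
      fin_cases i <;> fin_cases j <;>
        simp [Matrix.mul_apply, Fin.sum_univ_two] <;>
        first
          | linear_combination (-(4 * x + 1)) * hw
          | linear_combination (-2 * (x + 1)) * hw
          | linear_combination (-2 * x) * hw
          | linear_combination (-(2 * x + 1)) * hw
          | linear_combination (4 * x + 1) * hw
          | linear_combination (2 * (x + 1)) * hw
          | linear_combination (2 * x) * hw
          | linear_combination (2 * x + 1) * hw
          | linear_combination -hw
          | linear_combination hw
          | ring
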